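/- Suppose the vectors v_1,...,v_m ∈ ℤ^n are Farkas-related and let a_1 ≤ b_1, ..., a_m ≤ b_m be integers. A vector w ∈ ℤ^n can be written as w = Σ_{i=1}^m x_i v_i for some integers x_i with a_i ≤ x_i ≤ b_i for each i, if and only if w ∈ Σ_{i=1}^m ℤ v_i and for every {v_1,...,v_m}-indecomposable point [u] ∈ ℝP_+^{n-1} one has (u,w) ≤ Σ_{i=1}^m a_i·((u,v_i) − |(u,v_i)|)/2 + Σ_{i=1}^m b_i·((u,v_i) + |(u,v_i)|)/2. -/

import Mathlib

noncomputable section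

/-- The standard inner product on `ℝ^n`. -/
def dotR {n : ℕ} (u v : Fin n → ℝ) : ℝ := ∑ i, u i * v i

/-- `[u] = [u']` : positive equivalence of nonzero vectors (`u' = r • u` with `r > 0`). -/
def PosEq {n : ℕ} (u u' : Fin n → ℝ) : Prop := ∃ r : ℝ, 0 < r ∧ u' = r • u

/-- `u` is `{v₁,…,vₘ}`-decomposable. -/
def Decomp {n m : ℕ} (v : Fin m → Fin n → ℝ) (u : Fin n → ℝ) : Prop :=
  ∃ u' u'' : Fin n → ℝ, u' ≠ 0 ∧ u'' ≠ 0 ∧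
    u' ∈ Submodule.span ℝ (Set.range v) ∧ u'' ∈ Submodule.span ℝ (Set.range v) ∧
    u = u' + u'' ∧ ¬ PosEq u u' ∧ ¬ PosEq u u'' ∧
    ∀ i, 0 ≤ dotR u' (v i) * dotR u'' (v i)

/-- `u` is `{v₁,…,vₘ}`-indecomposable. -/
def Indecomp {n m : ℕ} (v : Fin m → Fin n → ℝ) (u : Fin n → ℝ) : Prop :=
  u ≠ 0 ∧ u ∈ Submodule.span ℝ (Set.range v) ∧ ¬ Decomp v u

/-- The embedding `ℤ^n ⊆ ℚ^n`. -/
def ZtoQ {n : ℕ} (x : Fin n → ℤ) : Fin n → ℚ := fun i => (x i : ℚ)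

/-- The embedding `ℤ^n ⊆ ℝ^n`. -/
def ZtoR {n : ℕ} (x : Fin n → ℤ) : Fin n → ℝ := fun i => (x i : ℝ)

/-- The vectors `v₁,…,vₘ ∈ ℤ^n` are Farkas-related. -/
def FarkasRelated {n m : ℕ} (v : Fin m → Fin n → ℤ) : Prop :=
  ∀ a b : Fin m → ℤ, (∀ i, a i ≤ b i) →
    ∀ w : Fin n → ℤ, w ∈ Submodule.span ℤ (Set.range v) →
      (∃ x : Fin m → ℚ, (∀ i, (a i : ℚ) ≤ x i ∧ x i ≤ (b i : ℚ)) ∧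
        ZtoQ w = ∑ i, x i • ZtoQ (v i)) →
      ∃ y : Fin m → ℤ, (∀ i, a i ≤ y i ∧ y i ≤ b i) ∧ w = ∑ i, y i • v i


open Finset

section FMAux
variable {K : Type*} [Field K] [LinearOrder K] [IsStrictOrderedRing K]


theorem farkas_core : ∀ (m : ℕ) {ι : Type} [Fintype ι] (A : Fin m → ι → K) (c : ι → K),
    (∃ x : Fin m → K, ∀ j, ∑ i, x i * A i j ≤ c j) ∨
    (∃ y : ι → K, (∀ j, 0 ≤ y j) ∧ (∀ i, ∑ j, y j * A i j = 0) ∧ ∑ j, y j * c j < 0) := by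
  intro m
  induction m with
  | zero =>
    intro ι _ A c
    by_cases h : ∀ j, 0 ≤ c j
    · exact Or.inl ⟨0, fun j => by simpa using h j⟩
    · push_neg at h
      obtain ⟨j₀, hj₀⟩ := h
      classical
      refine Or.inr ⟨fun j => if j = j₀ then 1 else 0, ?_, fun i => i.elim0, ?_⟩
      · intro j; dsimp only; split <;> norm_num
      · simpa [ite_mul] using hj₀
  | succ m IH =>
    intro ι _ A c
    classical
    set α : ι → K := fun j => A (Fin.last m) j with hα
    set B : Fin m → ι → K := fun i j => A i.castSucc j with hB
    set A' : Fin m → ι ⊕ ι × ι → K := fun i => Sum.elim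
      (fun j => if α j = 0 then B i j else 0)
      (fun p => if 0 < α p.1 ∧ α p.2 < 0 then B i p.1 / α p.1 - B i p.2 / α p.2 else 0)
      with hA'
    set c' : ι ⊕ ι × ι → K := Sum.elim
      (fun j => if α j = 0 then c j else 0)
      (fun p => if 0 < α p.1 ∧ α p.2 < 0 then c p.1 / α p.1 - c p.2 / α p.2 else 0)
      with hc'
    rcases IH A' c' with ⟨x', hx'⟩ | ⟨y', hy0, hyA, hyc⟩
    · -- the reduced system is solvable; extend the solution
      left
      set S : ι → K := fun j => ∑ i, x' i * B i j with hS
      have hzero : ∀ j, α j = 0 → S j ≤ c j := by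
        intro j hj
        have := hx' (Sum.inl j)
        simpa [hA', hc', hj, mul_ite] using this
      set U : ι → K := fun j => (c j - S j) / α j with hU
      have hpair : ∀ jp jn, 0 < α jp → α jn < 0 → U jn ≤ U jp := by
        intro jp jn hp hn
        have hcond : 0 < α jp ∧ α jn < 0 := ⟨hp, hn⟩
        have h2 := hx' (Sum.inr (jp, jn))
        simp only [hA', hc', Sum.elim_inr, if_pos hcond] at h2
        simp only [mul_sub, sum_sub_distrib, ← mul_div_assoc, ← sum_div] at h2
        simp only [hU]
        rw [sub_div, sub_div]
        have hS1 : S jp = ∑ i, x' i * B i jp := rfl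
        have hS2 : S jn = ∑ i, x' i * B i jn := rfl
        rw [hS1, hS2]
        linarith
      set NS : Finset ι := univ.filter (fun j => α j < 0) with hNS
      set PS : Finset ι := univ.filter (fun j => 0 < α j) with hPS
      set t : K := if hn : NS.Nonempty then NS.sup' hn U
        else if hp : PS.Nonempty then PS.inf' hp U else 0 with ht
      have hlow : ∀ j, α j < 0 → U j ≤ t := by
        intro j hj
        have hjNS : j ∈ NS := by simp [hNS, hj]
        rw [ht, dif_pos ⟨j, hjNS⟩]
        exact Finset.le_sup' U hjNS
      have hhigh : ∀ j, 0 < α j → t ≤ U j := by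
        intro j hj
        have hjPS : j ∈ PS := by simp [hPS, hj]
        rw [ht]
        split
        · next hn =>
          apply Finset.sup'_le
          intro jn hjn
          exact hpair j jn hj (by simpa [hNS] using hjn)
        · rw [dif_pos ⟨j, hjPS⟩]
          exact Finset.inf'_le U hjPS
      refine ⟨Fin.snoc x' t, fun j => ?_⟩
      rw [Fin.sum_univ_castSucc]
      simp only [Fin.snoc_castSucc, Fin.snoc_last]
      have hSj : ∑ i : Fin m, x' i * A i.castSucc j = S j := rfl
      rw [hSj]
      rcases lt_trichotomy (α j) 0 with hj | hj | hj
      · have := hlow j hj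
        rw [hU] at this
        have := (div_le_iff_of_neg hj).mp this
        have hAj : A (Fin.last m) j = α j := rfl
        rw [hAj]; linarith
      · have hAj : A (Fin.last m) j = α j := rfl
        rw [hAj, hj, mul_zero, add_zero]
        exact hzero j hj
      · have := hhigh j hj
        rw [hU, le_div_iff₀ hj] at this
        have hAj : A (Fin.last m) j = α j := rfl
        rw [hAj]; linarith
    · -- certificate for the reduced system pulls back
      right
      set y : ι → K := fun j =>
        (if α j = 0 then y' (Sum.inl j) else 0)
        + (if 0 < α j then (∑ jn, if α jn < 0 then y' (Sum.inr (j, jn)) else 0) / α j else 0)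
        + (if α j < 0 then (∑ jp, if 0 < α jp then y' (Sum.inr (jp, j)) else 0) / (-α j) else 0)
        with hy
      have t1 : ∀ g : ι → K, ∀ j, (if α j = 0 then y' (Sum.inl j) else 0) * g j
          = y' (Sum.inl j) * (if α j = 0 then g j else 0) := by
        intro g j; split_ifs <;> ring
      have t2 : ∀ g : ι → K, ∀ j,
          (if 0 < α j then (∑ jn, if α jn < 0 then y' (Sum.inr (j, jn)) else 0) / α j else 0) * g j
          = ∑ jn, (if 0 < α j ∧ α jn < 0 then y' (Sum.inr (j, jn)) * (g j / α j) else 0) := by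
        intro g j
        split_ifs with hj
        · rw [div_mul_eq_mul_div, sum_mul, sum_div]
          refine sum_congr rfl fun jn _ => ?_
          by_cases h1 : α jn < 0
          · rw [if_pos h1, if_pos ⟨hj, h1⟩, mul_div_assoc]
          · rw [if_neg h1, if_neg (fun hc => h1 hc.2), zero_mul, zero_div]
        · rw [zero_mul]
          exact (Finset.sum_eq_zero fun jn _ => if_neg (fun hc => hj hc.1)).symm
      have t3 : ∀ g : ι → K, ∀ j,
          (if α j < 0 then (∑ jp, if 0 < α jp then y' (Sum.inr (jp, j)) else 0) / (-α j) else 0) * g j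
          = ∑ jp, (if 0 < α jp ∧ α j < 0 then y' (Sum.inr (jp, j)) * (-(g j / α j)) else 0) := by
        intro g j
        split_ifs with hj
        · rw [div_mul_eq_mul_div, sum_mul, sum_div]
          refine sum_congr rfl fun jp _ => ?_
          by_cases h1 : 0 < α jp
          · rw [if_pos h1, if_pos ⟨h1, hj⟩, mul_div_assoc, div_neg, mul_neg]
          · rw [if_neg h1, if_neg (fun hc => h1 hc.1), zero_mul, zero_div]
        · rw [zero_mul]
          exact (Finset.sum_eq_zero fun jp _ => if_neg (fun hc => hj hc.2)).symm
      have key : ∀ g : ι → K, ∑ j, y j * g j =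
          (∑ j, y' (Sum.inl j) * (if α j = 0 then g j else 0)) +
          ∑ p : ι × ι, y' (Sum.inr p) *
            (if 0 < α p.1 ∧ α p.2 < 0 then g p.1 / α p.1 - g p.2 / α p.2 else 0) := by
        intro g
        have expand : ∑ j, y j * g j
            = (∑ j, y' (Sum.inl j) * (if α j = 0 then g j else 0))
              + ((∑ j, ∑ jn, if 0 < α j ∧ α jn < 0 then y' (Sum.inr (j, jn)) * (g j / α j) else 0)
              + (∑ j, ∑ jp, if 0 < α jp ∧ α j < 0 then y' (Sum.inr (jp, j)) * (-(g j / α j)) else 0)) := by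
          rw [← sum_add_distrib, ← sum_add_distrib]
          refine sum_congr rfl fun j _ => ?_
          rw [← t1 g j, ← t2 g j, ← t3 g j, ← add_mul, ← add_mul, ← add_assoc]
        rw [expand]
        congr 1
        have hswap : (∑ j, ∑ jp, if 0 < α jp ∧ α j < 0 then y' (Sum.inr (jp, j)) * (-(g j / α j)) else 0)
            = ∑ jp, ∑ jn, if 0 < α jp ∧ α jn < 0 then y' (Sum.inr (jp, jn)) * (-(g jn / α jn)) else 0 :=
          Finset.sum_comm
        rw [hswap, ← sum_add_distrib, Fintype.sum_prod_type]
        refine sum_congr rfl fun jp _ => ?_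
        rw [← sum_add_distrib]
        refine sum_congr rfl fun jn _ => ?_
        split_ifs with h
        · ring
        · simp
      refine ⟨y, ?_, ?_, ?_⟩
      · intro j
        have hyj : y j = (if α j = 0 then y' (Sum.inl j) else 0)
            + (if 0 < α j then (∑ jn, if α jn < 0 then y' (Sum.inr (j, jn)) else 0) / α j else 0)
            + (if α j < 0 then (∑ jp, if 0 < α jp then y' (Sum.inr (jp, j)) else 0) / (-α j) else 0) :=
          rfl
        rw [hyj]
        have h1 : (0:K) ≤ if α j = 0 then y' (Sum.inl j) else 0 := by
          split_ifs; exacts [hy0 _, le_rfl]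
        have h2 : (0:K) ≤ if 0 < α j then (∑ jn, if α jn < 0 then y' (Sum.inr (j, jn)) else 0) / α j else 0 := by
          split_ifs with h
          · exact div_nonneg (sum_nonneg fun jn _ => by split_ifs; exacts [hy0 _, le_rfl]) h.le
          · exact le_rfl
        have h3 : (0:K) ≤ if α j < 0 then (∑ jp, if 0 < α jp then y' (Sum.inr (jp, j)) else 0) / (-α j) else 0 := by
          split_ifs with h
          · exact div_nonneg (sum_nonneg fun jp _ => by split_ifs; exacts [hy0 _, le_rfl])
              (neg_pos.mpr h).le
          · exact le_rfl
        exact add_nonneg (add_nonneg h1 h2) h3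
      · intro i
        refine Fin.lastCases ?_ (fun i => ?_) i
        · refine (key _).trans ?_
          have e1 : (∑ j, y' (Sum.inl j) * (if α j = 0 then A (Fin.last m) j else 0)) = 0 := by
            refine Finset.sum_eq_zero fun j _ => ?_
            split_ifs with h
            · rw [show A (Fin.last m) j = α j from rfl, h, mul_zero]
            · rw [mul_zero]
          have e2 : (∑ p : ι × ι, y' (Sum.inr p) *
              (if 0 < α p.1 ∧ α p.2 < 0 then
                A (Fin.last m) p.1 / α p.1 - A (Fin.last m) p.2 / α p.2 else 0)) = 0 := by
            refine Finset.sum_eq_zero fun p _ => ?_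
            split_ifs with h
            · rw [show A (Fin.last m) p.1 = α p.1 from rfl, show A (Fin.last m) p.2 = α p.2 from rfl,
                div_self (ne_of_gt h.1), div_self (ne_of_lt h.2), sub_self, mul_zero]
            · rw [mul_zero]
          rw [e1, e2, add_zero]
        · refine (key _).trans ?_
          have h := hyA i
          rw [Fintype.sum_sum_type] at h
          simpa [hA', hB] using h
      · refine lt_of_le_of_lt (le_of_eq (key c)) ?_
        have h := hyc
        rw [Fintype.sum_sum_type] at h
        simpa [hc'] using h

theorem farkas_box {n mm : ℕ} (v : Fin mm → Fin n → K) (w : Fin n → K)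
    (a b : Fin mm → K) (hab : ∀ i, a i ≤ b i) :
    (∃ x : Fin mm → K, (∀ i, a i ≤ x i ∧ x i ≤ b i) ∧ ∀ k, w k = ∑ i, x i * v i k) ∨
    (∃ u : Fin n → K, ∑ i, max (a i * ∑ k, u k * v i k) (b i * ∑ k, u k * v i k)
      < ∑ k, u k * w k) := by
  classical
  set A : Fin mm → (Fin n ⊕ Fin n) ⊕ (Fin mm ⊕ Fin mm) → K := fun i => Sum.elim
    (Sum.elim (fun k => v i k) (fun k => -v i k))
    (Sum.elim (fun i' => if i = i' then 1 else 0) (fun i' => if i = i' then -1 else 0)) with hA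
  set c : (Fin n ⊕ Fin n) ⊕ (Fin mm ⊕ Fin mm) → K := Sum.elim
    (Sum.elim (fun k => w k) (fun k => -w k))
    (Sum.elim b (fun i => -a i)) with hc
  rcases farkas_core mm A c with ⟨x, hx⟩ | ⟨y, hy0, hyA, hyc⟩
  · left
    refine ⟨x, fun i => ⟨?_, ?_⟩, fun k => ?_⟩
    · have h := hx (Sum.inr (Sum.inr i))
      simp [hA, hc, mul_ite] at h
      linarith
    · have h := hx (Sum.inr (Sum.inl i))
      simp [hA, hc, mul_ite] at h
      linarith
    · have h1 := hx (Sum.inl (Sum.inl k))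
      have h2 := hx (Sum.inl (Sum.inr k))
      simp [hA, hc, mul_neg] at h1 h2
      exact le_antisymm h2 h1
  · right
    set p : Fin n → K := fun k => y (Sum.inl (Sum.inl k)) with hp
    set q : Fin n → K := fun k => y (Sum.inl (Sum.inr k)) with hq
    set r : Fin mm → K := fun i => y (Sum.inr (Sum.inl i)) with hr
    set s : Fin mm → K := fun i => y (Sum.inr (Sum.inr i)) with hs
    refine ⟨fun k => q k - p k, ?_⟩
    have hyA' : ∀ i, ∑ k, (q k - p k) * v i k = r i - s i := by
      intro i
      have h := hyA i
      rw [Fintype.sum_sum_type, Fintype.sum_sum_type, Fintype.sum_sum_type] at h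
      simp [hA, mul_ite, mul_neg, sub_mul, Finset.sum_sub_distrib] at h
      simp only [hp, hq, hr, hs, sub_mul, Finset.sum_sub_distrib]
      linarith
    have hyc' : ∑ i, r i * b i - ∑ i, s i * a i < ∑ k, (q k - p k) * w k := by
      have h := hyc
      rw [Fintype.sum_sum_type, Fintype.sum_sum_type, Fintype.sum_sum_type] at h
      simp [hc, mul_neg] at h
      simp only [hp, hq, hr, hs, sub_mul, Finset.sum_sub_distrib]
      linarith
    have hbound : ∀ i, max (a i * (r i - s i)) (b i * (r i - s i)) ≤ r i * b i - s i * a i := by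
      intro i
      have h0r : 0 ≤ r i := hy0 _
      have h0s : 0 ≤ s i := hy0 _
      have h1 : a i * r i ≤ b i * r i := mul_le_mul_of_nonneg_right (hab i) h0r
      have h2 : a i * s i ≤ b i * s i := mul_le_mul_of_nonneg_right (hab i) h0s
      apply max_le <;> nlinarith
    calc ∑ i, max (a i * ∑ k, (q k - p k) * v i k) (b i * ∑ k, (q k - p k) * v i k)
        = ∑ i, max (a i * (r i - s i)) (b i * (r i - s i)) := by
          refine Finset.sum_congr rfl fun i _ => ?_; rw [hyA' i]
      _ ≤ ∑ i, (r i * b i - s i * a i) := Finset.sum_le_sum fun i _ => hbound i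
      _ = ∑ i, r i * b i - ∑ i, s i * a i := Finset.sum_sub_distrib _ _
      _ < ∑ k, (q k - p k) * w k := hyc'


lemma boxmax {a b : K} (hab : a ≤ b) (d : K) :
    a * ((d - |d|)/2) + b * ((d + |d|)/2) = max (a*d) (b*d) := by
  rcases le_or_gt 0 d with hd | hd
  · rw [abs_of_nonneg hd, max_eq_right (mul_le_mul_of_nonneg_right hab hd)]; ring
  · rw [abs_of_neg hd, max_eq_left (mul_le_mul_of_nonpos_right hab hd.le)]; ring

end FMAux

local notation "⟪" x ", " y "⟫" => @inner ℝ _ _ x y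

theorem exists_indecomp {E : Type*} [NormedAddCommGroup E] [InnerProductSpace ℝ E]
    {m : ℕ} (vv : Fin m → E) (ww : E) (hw : ww ∈ Submodule.span ℝ (Set.range vv))
    (a b : Fin m → ℝ) (U : E)
    (hU : ∑ i, a i * ((⟪U, vv i⟫ - |⟪U, vv i⟫|)/2) + ∑ i, b i * ((⟪U, vv i⟫ + |⟪U, vv i⟫|)/2)
      < ⟪U, ww⟫) :
    ∃ u₀ : E, u₀ ≠ 0 ∧ u₀ ∈ Submodule.span ℝ (Set.range vv) ∧
      (∀ u' u'' : E, u' ≠ 0 → u'' ≠ 0 →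
        u' ∈ Submodule.span ℝ (Set.range vv) → u'' ∈ Submodule.span ℝ (Set.range vv) →
        u₀ = u' + u'' → (∀ i, 0 ≤ ⟪u', vv i⟫ * ⟪u'', vv i⟫) →
        (∃ r : ℝ, 0 < r ∧ u' = r • u₀) ∨ (∃ r : ℝ, 0 < r ∧ u'' = r • u₀)) ∧
      ∑ i, a i * ((⟪u₀, vv i⟫ - |⟪u₀, vv i⟫|)/2) + ∑ i, b i * ((⟪u₀, vv i⟫ + |⟪u₀, vv i⟫|)/2)
        < ⟪u₀, ww⟫ := by
  classical
  set V := Submodule.span ℝ (Set.range vv) with hV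
  set Gf : E → ℝ := fun u => ⟪u, ww⟫ -
    (∑ i, a i * ((⟪u, vv i⟫ - |⟪u, vv i⟫|)/2) + ∑ i, b i * ((⟪u, vv i⟫ + |⟪u, vv i⟫|)/2))
    with hGf
  set Nf : E → ℝ := fun u => ∑ i, |⟪u, vv i⟫| with hNf
  have hdc : ∀ i, Continuous fun u : E => ⟪u, vv i⟫ := fun i =>
    continuous_id.inner continuous_const
  have hNc : Continuous Nf := continuous_finset_sum _ fun i _ => (hdc i).abs
  have hGc : Continuous Gf := by
    refine (continuous_id.inner continuous_const).sub (Continuous.add ?_ ?_)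
    · exact continuous_finset_sum _ fun i _ =>
        continuous_const.mul (((hdc i).sub (hdc i).abs).div_const 2)
    · exact continuous_finset_sum _ fun i _ =>
        continuous_const.mul (((hdc i).add (hdc i).abs).div_const 2)
  have hGsmul : ∀ (r : ℝ), 0 ≤ r → ∀ u, Gf (r • u) = r * Gf u := by
    intro r hr u
    simp only [hGf, real_inner_smul_left, abs_mul, abs_of_nonneg hr]
    rw [mul_sub, mul_add, Finset.mul_sum, Finset.mul_sum]
    congr 1
    congr 1 <;> exact Finset.sum_congr rfl fun i _ => by ring
  have hNsmul : ∀ (r : ℝ), 0 ≤ r → ∀ u, Nf (r • u) = r * Nf u := by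
    intro r hr u
    simp only [hNf, real_inner_smul_left, abs_mul, abs_of_nonneg hr]
    rw [Finset.mul_sum]
  have hNpos : ∀ u, u ∈ V → u ≠ 0 → 0 < Nf u := by
    intro u huV hu
    have hex : ∃ i, ⟪u, vv i⟫ ≠ 0 := by
      by_contra hall
      push_neg at hall
      have h0 : ⟪u, u⟫ = (0:ℝ) := by
        have : ∀ x ∈ V, ⟪u, x⟫ = (0:ℝ) := by
          intro x hx
          induction hx using Submodule.span_induction with
          | mem x hxr => obtain ⟨i, rfl⟩ := hxr; exact hall i
          | zero => exact inner_zero_right u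
          | add x y _ _ hx hy => rw [inner_add_right, hx, hy, add_zero]
          | smul r x _ hx => rw [real_inner_smul_right, hx, mul_zero]
        exact this u huV
      exact hu (inner_self_eq_zero.mp h0)
    obtain ⟨i, hi⟩ := hex
    calc (0:ℝ) < |⟪u, vv i⟫| := abs_pos.mpr hi
      _ ≤ Nf u := by
        simp only [hNf]
        exact Finset.single_le_sum (f := fun j => |⟪u, vv j⟫|) (fun j _ => abs_nonneg _)
          (Finset.mem_univ i)
  have habs : ∀ x y : ℝ, 0 ≤ x * y → |x + y| = |x| + |y| := by
    intro x y hxy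
    rcases mul_nonneg_iff.mp hxy with ⟨hx, hy⟩ | ⟨hx, hy⟩
    · rw [abs_of_nonneg hx, abs_of_nonneg hy, abs_of_nonneg (add_nonneg hx hy)]
    · rw [abs_of_nonpos hx, abs_of_nonpos hy, abs_of_nonpos (add_nonpos hx hy)]; ring
  have hGadd : ∀ u' u'', (∀ i, 0 ≤ ⟪u', vv i⟫ * ⟪u'', vv i⟫) →
      Gf (u' + u'') = Gf u' + Gf u'' := by
    intro u' u'' hcomp
    have habs' : ∀ i, |⟪u' + u'', vv i⟫| = |⟪u', vv i⟫| + |⟪u'', vv i⟫| := by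
      intro i; rw [inner_add_left]; exact habs _ _ (hcomp i)
    have e1 : ∀ i, a i * ((⟪u' + u'', vv i⟫ - |⟪u' + u'', vv i⟫|)/2)
        = a i * ((⟪u', vv i⟫ - |⟪u', vv i⟫|)/2) + a i * ((⟪u'', vv i⟫ - |⟪u'', vv i⟫|)/2) := by
      intro i; rw [habs' i, inner_add_left]; ring
    have e2 : ∀ i, b i * ((⟪u' + u'', vv i⟫ + |⟪u' + u'', vv i⟫|)/2)
        = b i * ((⟪u', vv i⟫ + |⟪u', vv i⟫|)/2) + b i * ((⟪u'', vv i⟫ + |⟪u'', vv i⟫|)/2) := by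
      intro i; rw [habs' i, inner_add_left]; ring
    simp only [hGf]
    rw [inner_add_left, Finset.sum_congr rfl fun i _ => e1 i,
      Finset.sum_congr rfl fun i _ => e2 i, Finset.sum_add_distrib, Finset.sum_add_distrib]
    ring
  have hNadd : ∀ u' u'', (∀ i, 0 ≤ ⟪u', vv i⟫ * ⟪u'', vv i⟫) →
      Nf (u' + u'') = Nf u' + Nf u'' := by
    intro u' u'' hcomp
    simp only [hNf]
    rw [← Finset.sum_add_distrib]
    refine Finset.sum_congr rfl fun i _ => ?_
    rw [inner_add_left]; exact habs _ _ (hcomp i)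
  haveI : FiniteDimensional ℝ V := FiniteDimensional.span_of_finite ℝ (Set.finite_range vv)
  have hwV : ww ∈ V := hw
  set u₁ : E := (V.orthogonalProjectionOnto U : E) with hu₁
  have hu₁V : u₁ ∈ V := SetLike.coe_mem _
  have hInnerProj : ∀ x, x ∈ V → ⟪u₁, x⟫ = ⟪U, x⟫ := by
    intro x hx
    have h := Submodule.inner_orthogonalProjection_eq_of_mem_right (𝕜 := ℝ) (K := V) ⟨x, hx⟩ U
    exact h
  have hdiProj : ∀ i, ⟪u₁, vv i⟫ = ⟪U, vv i⟫ := fun i =>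
    hInnerProj _ (Submodule.subset_span ⟨i, rfl⟩)
  have hGproj : Gf u₁ = Gf U := by
    simp only [hGf, hdiProj, hInnerProj ww hwV]
  have hGfU : 0 < Gf U := by simp only [hGf]; linarith
  have hGu₁ : 0 < Gf u₁ := hGproj ▸ hGfU
  have hGf0 : Gf (0:E) = 0 := by simp [hGf]
  have hNf0 : Nf (0:E) = 0 := by simp [hNf]
  have hu₁0 : u₁ ≠ 0 := by
    intro h; rw [h, hGf0] at hGu₁; exact lt_irrefl 0 hGu₁
  set C : Set E := {u | u ∈ V ∧ ‖u‖ = 1} with hC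
  have hCcompact : IsCompact C := by
    have h1 : IsCompact (Metric.sphere (0:V) 1) := isCompact_sphere 0 1
    have h2 : C = (Subtype.val '' (Metric.sphere (0:V) 1)) := by
      ext x
      constructor
      · rintro ⟨hxV, hx1⟩
        exact ⟨⟨x, hxV⟩, by simpa [dist_eq_norm] using hx1, rfl⟩
      · rintro ⟨y, hy, rfl⟩
        refine ⟨y.2, ?_⟩
        simpa [dist_eq_norm] using hy
    rw [h2]
    exact h1.image continuous_subtype_val
  have hmemC : ∀ u : E, u ∈ V → u ≠ 0 → (‖u‖⁻¹ • u) ∈ C := by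
    intro u huV hu
    refine ⟨Submodule.smul_mem V _ huV, ?_⟩
    rw [norm_smul, norm_inv, norm_norm, inv_mul_cancel₀ (norm_ne_zero_iff.mpr hu)]
  have hCne : C.Nonempty := ⟨_, hmemC u₁ hu₁V hu₁0⟩
  have hCnonzero : ∀ u, u ∈ C → u ≠ 0 := by
    intro u hu h; rw [h] at hu; simpa using hu.2
  have hratio : ContinuousOn (fun u => Gf u / Nf u) C :=
    ContinuousOn.div hGc.continuousOn hNc.continuousOn
      (fun u hu => (hNpos u hu.1 (hCnonzero u hu)).ne')
  obtain ⟨um, humC, hum⟩ := hCcompact.exists_isMaxOn hCne hratio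
  set M : ℝ := Gf um / Nf um with hM
  have hNum : 0 < Nf um := hNpos um humC.1 (hCnonzero um humC)
  have hscale : ∀ u : E, u ≠ 0 → Gf u = ‖u‖ * Gf (‖u‖⁻¹ • u) ∧ Nf u = ‖u‖ * Nf (‖u‖⁻¹ • u) := by
    intro u hu
    have hn : (0:ℝ) < ‖u‖ := norm_pos_iff.mpr hu
    have hu_eq : (‖u‖ : ℝ) • (‖u‖⁻¹ • u) = u := by
      rw [smul_smul, mul_inv_cancel₀ hn.ne', one_smul]
    constructor
    · conv_lhs => rw [← hu_eq]
      rw [hGsmul _ (norm_nonneg u) _]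
    · conv_lhs => rw [← hu_eq]
      rw [hNsmul _ (norm_nonneg u) _]
  have hMbound : ∀ u, u ∈ V → Gf u ≤ M * Nf u := by
    intro u huV
    rcases eq_or_ne u 0 with rfl | hu
    · rw [hGf0, hNf0, mul_zero]
    · have hyC := hmemC u huV hu
      have hn : (0:ℝ) < ‖u‖ := norm_pos_iff.mpr hu
      have hNy : 0 < Nf (‖u‖⁻¹ • u) := hNpos _ hyC.1 (hCnonzero _ hyC)
      have h2 : Gf (‖u‖⁻¹ • u) ≤ M * Nf (‖u‖⁻¹ • u) := (div_le_iff₀ hNy).mp (hum hyC)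
      obtain ⟨hGu, hNu⟩ := hscale u hu
      rw [hGu, hNu]
      calc ‖u‖ * Gf (‖u‖⁻¹ • u) ≤ ‖u‖ * (M * Nf (‖u‖⁻¹ • u)) :=
            mul_le_mul_of_nonneg_left h2 hn.le
        _ = M * (‖u‖ * Nf (‖u‖⁻¹ • u)) := by ring
  have hMpos : 0 < M := by
    have hy := hmemC u₁ hu₁V hu₁0
    have hNy : 0 < Nf (‖u₁‖⁻¹ • u₁) := hNpos _ hy.1 (hCnonzero _ hy)
    have hGy : 0 < Gf (‖u₁‖⁻¹ • u₁) := by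
      rw [hGsmul _ (inv_nonneg.mpr (norm_nonneg u₁)) u₁]
      exact mul_pos (inv_pos.mpr (norm_pos_iff.mpr hu₁0)) hGu₁
    exact lt_of_lt_of_le (div_pos hGy hNy) (hum hy)
  set A : Set E := C ∩ {u | Gf u = M * Nf u} with hA
  have hAcompact : IsCompact A :=
    hCcompact.inter_right (isClosed_eq hGc (continuous_const.mul hNc))
  have humA : um ∈ A := ⟨humC, by rw [Set.mem_setOf_eq, hM, div_mul_cancel₀ _ hNum.ne']⟩
  obtain ⟨u₀, hu₀A, hmin⟩ := hAcompact.exists_isMinOn ⟨um, humA⟩ hNc.continuousOn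
  obtain ⟨⟨hu₀V, hu₀n⟩, hu₀G⟩ := hu₀A
  have hu₀0 : u₀ ≠ 0 := by intro h; rw [h] at hu₀n; simpa using hu₀n
  have hNu₀ : 0 < Nf u₀ := hNpos u₀ hu₀V hu₀0
  have hGu₀ : 0 < Gf u₀ := by rw [hu₀G]; exact mul_pos hMpos hNu₀
  refine ⟨u₀, hu₀0, hu₀V, ?_, by simp only [hGf] at hGu₀; linarith⟩
  intro u' u'' hne' hne'' hV' hV'' hsum hcomp
  have hGsplit : Gf u₀ = Gf u' + Gf u'' := by rw [hsum]; exact hGadd u' u'' hcomp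
  have hNsplit : Nf u₀ = Nf u' + Nf u'' := by rw [hsum]; exact hNadd u' u'' hcomp
  have hb' : Gf u' ≤ M * Nf u' := hMbound u' hV'
  have hb'' : Gf u'' ≤ M * Nf u'' := hMbound u'' hV''
  have hexp : M * (Nf u' + Nf u'') = M * Nf u' + M * Nf u'' := by ring
  have hu₀G' : Gf u₀ = M * Nf u₀ := hu₀G
  have hexp2 : M * Nf u₀ = M * Nf u' + M * Nf u'' := by rw [hNsplit]; ring
  have heq' : Gf u' = M * Nf u' := by linarith
  have heq'' : Gf u'' = M * Nf u'' := by linarith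
  have hn' : (0:ℝ) < ‖u'‖ := norm_pos_iff.mpr hne'
  have hn'' : (0:ℝ) < ‖u''‖ := norm_pos_iff.mpr hne''
  have hp'A : (‖u'‖⁻¹ • u') ∈ A := by
    refine ⟨hmemC u' hV' hne', ?_⟩
    show Gf _ = M * Nf _
    rw [hGsmul _ (inv_nonneg.mpr (norm_nonneg _)) _, hNsmul _ (inv_nonneg.mpr (norm_nonneg _)) _,
      heq']
    ring
  have hp''A : (‖u''‖⁻¹ • u'') ∈ A := by
    refine ⟨hmemC u'' hV'' hne'', ?_⟩
    show Gf _ = M * Nf _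
    rw [hGsmul _ (inv_nonneg.mpr (norm_nonneg _)) _, hNsmul _ (inv_nonneg.mpr (norm_nonneg _)) _,
      heq'']
    ring
  have hmin' : Nf u₀ ≤ ‖u'‖⁻¹ * Nf u' :=
    le_of_le_of_eq (hmin hp'A) (hNsmul _ (inv_nonneg.mpr (norm_nonneg u')) u')
  have hmin'' : Nf u₀ ≤ ‖u''‖⁻¹ * Nf u'' :=
    le_of_le_of_eq (hmin hp''A) (hNsmul _ (inv_nonneg.mpr (norm_nonneg u'')) u'')
  have h1 : ‖u'‖ * Nf u₀ ≤ Nf u' := by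
    have h := mul_le_mul_of_nonneg_left hmin' hn'.le
    rwa [← mul_assoc, mul_inv_cancel₀ hn'.ne', one_mul] at h
  have h2 : ‖u''‖ * Nf u₀ ≤ Nf u'' := by
    have h := mul_le_mul_of_nonneg_left hmin'' hn''.le
    rwa [← mul_assoc, mul_inv_cancel₀ hn''.ne', one_mul] at h
  have hsumnorm : ‖u'‖ + ‖u''‖ ≤ 1 := by
    have h3 : (‖u'‖ + ‖u''‖) * Nf u₀ ≤ Nf u₀ := by
      rw [add_mul]
      calc ‖u'‖ * Nf u₀ + ‖u''‖ * Nf u₀ ≤ Nf u' + Nf u'' := add_le_add h1 h2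
        _ = Nf u₀ := hNsplit.symm
    exact (mul_le_iff_le_one_left hNu₀).mp h3
  have htri : ‖u' + u''‖ = ‖u'‖ + ‖u''‖ := by
    have e1 : ‖u' + u''‖ = 1 := by rw [← hsum]; exact hu₀n
    have e2 := norm_add_le u' u''
    linarith
  have hray : SameRay ℝ u' u'' := sameRay_iff_norm_add.mpr htri
  obtain ⟨r₁, r₂, hr₁, hr₂, hrr⟩ := hray.exists_pos hne' hne''
  left
  have hu''eq : u'' = (r₂⁻¹ * r₁) • u' := by
    have h := congrArg (fun z => r₂⁻¹ • z) hrr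
    simp only [smul_smul, inv_mul_cancel₀ hr₂.ne', one_smul] at h
    rw [← h]
  have hccpos : (0:ℝ) < 1 + r₂⁻¹ * r₁ := by positivity
  have hu₀eq : u₀ = (1 + r₂⁻¹ * r₁) • u' := by
    rw [hsum, hu''eq, add_smul, one_smul]
  refine ⟨(1 + r₂⁻¹ * r₁)⁻¹, inv_pos.mpr hccpos, ?_⟩
  rw [hu₀eq, smul_smul, inv_mul_cancel₀ hccpos.ne', one_smul]


lemma euc_inner {n : ℕ} (x y : EuclideanSpace ℝ (Fin n)) : ⟪x, y⟫ = dotR x y := by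
  simp [PiLp.inner_apply, RCLike.inner_apply, conj_trivial, dotR]
  exact Finset.sum_congr rfl fun _ _ => mul_comm _ _

lemma ztoR_span {n m : ℕ} (v : Fin m → Fin n → ℤ) (w : Fin n → ℤ)
    (h : w ∈ Submodule.span ℤ (Set.range v)) :
    ZtoR w ∈ Submodule.span ℝ (Set.range (fun i => ZtoR (v i))) := by
  induction h using Submodule.span_induction with
  | mem x hx =>
      obtain ⟨i, rfl⟩ := hx
      exact Submodule.subset_span ⟨i, rfl⟩
  | zero =>
      convert Submodule.zero_mem _
      funext k; simp [ZtoR]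
  | add x y _ _ hx hy =>
      convert Submodule.add_mem _ hx hy using 1
      funext k; simp [ZtoR]
  | smul r x _ hx =>
      have e : ZtoR (r • x) = (r : ℝ) • ZtoR x := by
        funext k; simp [ZtoR]
      rw [e]
      exact Submodule.smul_mem _ _ hx


/-- **Theorem 3.2**: Farkas' lemma over ℤ for Farkas-related vectors. -/
theorem farkas_integers {n m : ℕ} (v : Fin m → Fin n → ℤ)
    (hFR : FarkasRelated v) (a b : Fin m → ℤ) (hab : ∀ i, a i ≤ b i) (w : Fin n → ℤ) :
    (∃ x : Fin m → ℤ, (∀ i, a i ≤ x i ∧ x i ≤ b i) ∧ w = ∑ i, x i • v i) ↔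
      (w ∈ Submodule.span ℤ (Set.range v) ∧
        ∀ u : Fin n → ℝ, Indecomp (fun i => ZtoR (v i)) u →
          dotR u (ZtoR w) ≤
            ∑ i, (a i : ℝ) * ((dotR u (ZtoR (v i)) - |dotR u (ZtoR (v i))|) / 2) +
            ∑ i, (b i : ℝ) * ((dotR u (ZtoR (v i)) + |dotR u (ZtoR (v i))|) / 2)) := by 
  constructor
  · -- forward direction
    rintro ⟨x, hx, rfl⟩
    constructor
    · exact Submodule.sum_mem _ fun i _ =>
        Submodule.smul_mem _ _ (Submodule.subset_span ⟨i, rfl⟩)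
    · intro u _
      have hwk : ∀ k, (((∑ i, x i • v i) k : ℤ) : ℝ) = ∑ i, (x i : ℝ) * (v i k : ℝ) := by
        intro k
        rw [Finset.sum_apply]
        simp only [Pi.smul_apply, smul_eq_mul]
        push_cast
        rfl
      have hdot : dotR u (ZtoR (∑ i, x i • v i)) = ∑ i, (x i : ℝ) * dotR u (ZtoR (v i)) := by
        show ∑ k, u k * (((∑ i, x i • v i) k : ℤ) : ℝ) = _
        calc ∑ k, u k * (((∑ i, x i • v i) k : ℤ) : ℝ)
            = ∑ k, ∑ i, (x i : ℝ) * (u k * (v i k : ℝ)) := by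
              refine Finset.sum_congr rfl fun k _ => ?_
              rw [hwk k, Finset.mul_sum]
              exact Finset.sum_congr rfl fun i _ => by ring
          _ = ∑ i, ∑ k, (x i : ℝ) * (u k * (v i k : ℝ)) := Finset.sum_comm
          _ = ∑ i, (x i : ℝ) * ∑ k, u k * (v i k : ℝ) := by
              exact Finset.sum_congr rfl fun i _ => (Finset.mul_sum _ _ _).symm
      rw [hdot, ← Finset.sum_add_distrib]
      refine Finset.sum_le_sum fun i _ => ?_
      rw [boxmax (show (a i : ℝ) ≤ (b i : ℝ) by exact_mod_cast hab i) (dotR u (ZtoR (v i)))]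
      rcases le_or_gt 0 (dotR u (ZtoR (v i))) with h | h
      · exact le_max_of_le_right
          (mul_le_mul_of_nonneg_right (by exact_mod_cast (hx i).2) h)
      · exact le_max_of_le_left
          (mul_le_mul_of_nonpos_right (by exact_mod_cast (hx i).1) h.le)
  · -- backward direction
    rintro ⟨hw_span, hind⟩
    apply hFR a b hab w hw_span
    rcases farkas_box (K := ℚ) (fun i => ZtoQ (v i)) (ZtoQ w)
      (fun i => (a i : ℚ)) (fun i => (b i : ℚ))
      (fun i => by show (a i : ℚ) ≤ (b i : ℚ); exact_mod_cast hab i) with ⟨x, hx, hfun⟩ | ⟨u, hu⟩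
    · refine ⟨x, hx, funext fun k => ?_⟩
      rw [Finset.sum_apply]
      simp only [Pi.smul_apply, smul_eq_mul]
      exact hfun k
    · exfalso
      -- realify the certificate and extract an indecomposable violator
      set uR : EuclideanSpace ℝ (Fin n) := WithLp.toLp 2 (fun k => ((u k : ℚ) : ℝ)) with huR
      set vE : Fin m → EuclideanSpace ℝ (Fin n) := fun i => WithLp.toLp 2 (ZtoR (v i)) with hvE
      set wE : EuclideanSpace ℝ (Fin n) := WithLp.toLp 2 (ZtoR w) with hwE
      have hwEmem : wE ∈ Submodule.span ℝ (Set.range vE) := by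
          have := Submodule.apply_mem_span_image_of_mem_span
            (WithLp.linearEquiv 2 ℝ (Fin n → ℝ)).symm.toLinearMap (ztoR_span v w hw_span)
          rw [← Set.range_comp] at this
          exact this
      have hcast_d : ∀ i, ((∑ k, u k * ZtoQ (v i) k : ℚ) : ℝ) = dotR uR (ZtoR (v i)) := by
        intro i
        show _ = ∑ k, ((u k : ℚ) : ℝ) * ((v i k : ℤ) : ℝ)
        push_cast
        rfl
      have hcast_w : ((∑ k, u k * ZtoQ w k : ℚ) : ℝ) = dotR uR (ZtoR w) := by
        show _ = ∑ k, ((u k : ℚ) : ℝ) * ((w k : ℤ) : ℝ)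
        push_cast
        rfl
      have hureal : ∑ i, max ((a i : ℝ) * dotR uR (ZtoR (v i))) ((b i : ℝ) * dotR uR (ZtoR (v i)))
          < dotR uR (ZtoR w) := by
        have h := hu
        have hcast : ((∑ i, max ((a i : ℚ) * (∑ k, u k * ZtoQ (v i) k))
            ((b i : ℚ) * (∑ k, u k * ZtoQ (v i) k)) : ℚ) : ℝ)
            < ((∑ k, u k * ZtoQ w k : ℚ) : ℝ) := by exact_mod_cast h
        rw [hcast_w] at hcast
        refine lt_of_le_of_lt (le_of_eq ?_) hcast
        rw [Rat.cast_sum]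
        refine Finset.sum_congr rfl fun i _ => ?_
        rw [Rat.cast_max, Rat.cast_mul, Rat.cast_mul, hcast_d i]
        norm_cast
      have hU : ∑ i, (a i : ℝ) * ((⟪uR, vE i⟫ - |⟪uR, vE i⟫|)/2)
          + ∑ i, (b i : ℝ) * ((⟪uR, vE i⟫ + |⟪uR, vE i⟫|)/2) < ⟪uR, wE⟫ := by
        rw [euc_inner uR wE, ← Finset.sum_add_distrib]
        calc ∑ i, ((a i : ℝ) * ((⟪uR, vE i⟫ - |⟪uR, vE i⟫|)/2)
              + (b i : ℝ) * ((⟪uR, vE i⟫ + |⟪uR, vE i⟫|)/2))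
            = ∑ i, max ((a i : ℝ) * dotR uR (ZtoR (v i))) ((b i : ℝ) * dotR uR (ZtoR (v i))) := by
              refine Finset.sum_congr rfl fun i _ => ?_
              rw [euc_inner uR (vE i),
                boxmax (show (a i : ℝ) ≤ (b i : ℝ) by exact_mod_cast hab i)]
          _ < dotR uR (ZtoR w) := hureal
      obtain ⟨u₀, h0, hmem, hindec, hviol⟩ :=
        exists_indecomp vE wE hwEmem (fun i => (a i : ℝ)) (fun i => (b i : ℝ)) uR hU
      have hIndecomp : Indecomp (fun i => ZtoR (v i)) u₀ := by
        refine ⟨fun h => h0 (by simpa using h), ?_, ?_⟩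
        · have := Submodule.apply_mem_span_image_of_mem_span
            (WithLp.linearEquiv 2 ℝ (Fin n → ℝ)).toLinearMap hmem
          rw [← Set.range_comp] at this
          exact this
        rintro ⟨u', u'', hne', hne'', hmem', hmem'', hsum, hnp', hnp'', hsign⟩
        have hmemE : ∀ z : Fin n → ℝ, z ∈ Submodule.span ℝ (Set.range (fun i => ZtoR (v i))) →
            WithLp.toLp 2 z ∈ Submodule.span ℝ (Set.range vE) := by
          intro z hz
          have := Submodule.apply_mem_span_image_of_mem_span
            (WithLp.linearEquiv 2 ℝ (Fin n → ℝ)).symm.toLinearMap hz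
          rw [← Set.range_comp] at this
          exact this
        rcases hindec (WithLp.toLp 2 u') (WithLp.toLp 2 u'')
          (fun h => hne' (by simpa using h)) (fun h => hne'' (by simpa using h))
          (hmemE u' hmem') (hmemE u'' hmem'')
          (by rw [← WithLp.toLp_add, ← hsum, WithLp.toLp_ofLp])
          (fun i => by rw [euc_inner (WithLp.toLp 2 u') (vE i), euc_inner (WithLp.toLp 2 u'') (vE i)]; exact hsign i)
          with ⟨r, hr, he⟩ | ⟨r, hr, he⟩
        · exact hnp' ⟨r, hr, by rw [← WithLp.ofLp_smul, ← he, WithLp.ofLp_toLp]⟩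
        · exact hnp'' ⟨r, hr, by rw [← WithLp.ofLp_smul, ← he, WithLp.ofLp_toLp]⟩
      have hle := hind u₀ hIndecomp
      have hviol' : ∑ i, (a i : ℝ) * ((dotR u₀ (ZtoR (v i)) - |dotR u₀ (ZtoR (v i))|)/2)
          + ∑ i, (b i : ℝ) * ((dotR u₀ (ZtoR (v i)) + |dotR u₀ (ZtoR (v i))|)/2)
          < dotR u₀ (ZtoR w) := by
        have h := hviol
        simp only [euc_inner] at h
        exact h
      linarith
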